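/- For the composite channel over alphabet Σ_q, the maximum likelihood decision does not depend on the number of transmissions: for any two composite symbols c_1, c_2 ∈ Σ_q^comp and any observed distribution τ realizable with both n_1 and n_2 transmissions (i.e., all coordinates of n_1·τ and n_2·τ are integers), P[Θ(X^{c_1}_{n_1}) = τ] ≥ P[Θ(X^{c_2}_{n_1}) = τ] if and only if P[Θ(X^{c_1}_{n_2}) = τ] ≥ P[Θ(X^{c_2}_{n_2}) = τ]. -/

import Mathlib

open Finset

/-- the maximum-likelihood comparison between two composite symbols does not
depend on the number of transmissions.  An observed distribution `τ` realizable with both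
`n₁` and `n₂` transmissions is represented by count vectors `k₁, k₂` with `∑ k₁ = n₁`,
`∑ k₂ = n₂` and `k₁ i / n₁ = k₂ i / n₂` for all `i`; the probability of observing `τ` from a
composite symbol `c` with `n` transmissions is `multinomial(n; k) ∏ᵢ cᵢ^{kᵢ}`. -/
theorem stmt_9 (q n₁ n₂ : ℕ) (hq : 1 ≤ q) (hn₁ : 1 ≤ n₁) (hn₂ : 1 ≤ n₂)
    (c₁ c₂ : Fin q → ℝ)
    (hc₁ : ∀ i, 0 ≤ c₁ i) (hc₁s : ∑ i, c₁ i = 1)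
    (hc₂ : ∀ i, 0 ≤ c₂ i) (hc₂s : ∑ i, c₂ i = 1)
    (k₁ k₂ : Fin q → ℕ) (hk₁ : ∑ i, k₁ i = n₁) (hk₂ : ∑ i, k₂ i = n₂)
    (hτ : ∀ i, (k₁ i : ℝ) / n₁ = (k₂ i : ℝ) / n₂) :
    ((Nat.multinomial univ k₂ : ℝ) * ∏ i, c₂ i ^ k₂ i
        ≤ (Nat.multinomial univ k₂ : ℝ) * ∏ i, c₁ i ^ k₂ i)
      ↔ ((Nat.multinomial univ k₁ : ℝ) * ∏ i, c₂ i ^ k₁ i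
        ≤ (Nat.multinomial univ k₁ : ℝ) * ∏ i, c₁ i ^ k₁ i) := by
  have hn₁' : (0:ℝ) < n₁ := by exact_mod_cast hn₁
  have hn₂' : (0:ℝ) < n₂ := by exact_mod_cast hn₂
  have hkey : ∀ i, k₁ i * n₂ = k₂ i * n₁ := by
    intro i
    have := (div_eq_div_iff hn₁'.ne' hn₂'.ne').mp (hτ i)
    exact_mod_cast this
  have hm₁ : (0:ℝ) < (Nat.multinomial univ k₁ : ℝ) := by
    exact_mod_cast Nat.multinomial_pos _ _
  have hm₂ : (0:ℝ) < (Nat.multinomial univ k₂ : ℝ) := by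
    exact_mod_cast Nat.multinomial_pos _ _
  rw [mul_le_mul_iff_right₀ hm₁, mul_le_mul_iff_right₀ hm₂]
  have hp : ∀ (c : Fin q → ℝ), (∀ i, 0 ≤ c i) →
      (∏ i, c i ^ k₂ i) ^ n₁ = (∏ i, c i ^ k₁ i) ^ n₂ := by
    intro c hc
    rw [← Finset.prod_pow, ← Finset.prod_pow]
    refine Finset.prod_congr rfl fun i _ => ?_
    rw [← pow_mul, ← pow_mul, Nat.mul_comm (k₂ i) n₁, Nat.mul_comm (k₁ i) n₂,
      Nat.mul_comm n₁ (k₂ i), ← hkey i, Nat.mul_comm (k₁ i) n₂]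
  have pos : ∀ (c : Fin q → ℝ) (k : Fin q → ℕ), (∀ i, 0 ≤ c i) →
      0 ≤ ∏ i, c i ^ k i := fun c k hc =>
    Finset.prod_nonneg fun i _ => pow_nonneg (hc i) _
  constructor
  · intro h
    have h' : (∏ i, c₂ i ^ k₂ i) ^ n₁ ≤ (∏ i, c₁ i ^ k₂ i) ^ n₁ :=
      pow_le_pow_left₀ (pos c₂ k₂ hc₂) h n₁
    rw [hp c₂ hc₂, hp c₁ hc₁] at h'
    exact le_of_pow_le_pow_left₀ (by omega) (pos c₁ k₁ hc₁) h'
  · intro h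
    have h' : (∏ i, c₂ i ^ k₁ i) ^ n₂ ≤ (∏ i, c₁ i ^ k₁ i) ^ n₂ :=
      pow_le_pow_left₀ (pos c₂ k₁ hc₂) h n₂
    rw [← hp c₂ hc₂, ← hp c₁ hc₁] at h'
    exact le_of_pow_le_pow_left₀ (by omega) (pos c₁ k₂ hc₁) h'
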